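/- For the catalyst z = ⊕_{k=0}^{n-1} x^{⊗(n-1-k)} ⊗ y^{⊗k}, there exists a vector w such that x ⊗ z = x^{⊗n} ⊕ w and y ⊗ z = y^{⊗n} ⊕ w (as multisets of coordinates). -/

import Mathlib

open scoped BigOperators

/-- Tensor product of two multisets of real numbers (multiset of all pairwise products). -/
def mTensor (s t : Multiset ℝ) : Multiset ℝ := s.bind fun a => t.map (a * ·)

/-- `n`-fold tensor power of a multiset (`mPow s 0 = {1}`). -/
def mPow (s : Multiset ℝ) : ℕ → Multiset ℝ
  | 0 => {1}
  | n + 1 => mTensor s (mPow s n)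

lemma mTensor_add_right (s t u : Multiset ℝ) :
    mTensor s (t + u) = mTensor s t + mTensor s u := by
  simp [mTensor, Multiset.map_add, Multiset.bind_add]

lemma mTensor_sum (s : Multiset ℝ) (f : ℕ → Multiset ℝ) (r : Finset ℕ) :
    mTensor s (∑ k ∈ r, f k) = ∑ k ∈ r, mTensor s (f k) := by
  classical
  induction r using Finset.induction with
  | empty => simp [mTensor]
  | insert _ _ h ih => simp [Finset.sum_insert h, mTensor_add_right, ih]

lemma mTensor_comm (s t : Multiset ℝ) : mTensor s t = mTensor t s := by
  induction s using Multiset.induction with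
  | empty => simp [mTensor]
  | cons a s ih =>
    have : mTensor t (a ::ₘ s) = mTensor t {a} + mTensor t s := by
      have : (a ::ₘ s) = ({a} : Multiset ℝ) + s := by simp
      rw [this, mTensor_add_right]
    rw [this, ← ih]
    simp [mTensor, mul_comm]

lemma mTensor_assoc (s t u : Multiset ℝ) :
    mTensor s (mTensor t u) = mTensor (mTensor s t) u := by
  unfold mTensor
  rw [Multiset.bind_assoc]
  congr 1
  funext a
  rw [Multiset.map_bind, Multiset.bind_map]
  congr 1
  funext b
  simp [Multiset.map_map, Function.comp_def, mul_assoc]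

lemma mTensor_one (s : Multiset ℝ) : mTensor s {1} = s := by
  simp only [mTensor, Multiset.map_singleton, mul_one]
  exact (Multiset.bind_singleton s id).trans (Multiset.map_id s)

lemma one_mTensor (s : Multiset ℝ) : mTensor {1} s = s := by
  rw [mTensor_comm]; exact mTensor_one s

/-- For the catalyst `z = ⊕_{k=0}^{n-1} x^{⊗(n-1-k)} ⊗ y^{⊗k}`, there is a vector `w`
with `x ⊗ z = x^{⊗n} ⊕ w` and `y ⊗ z = y^{⊗n} ⊕ w`, as multisets of coordinates. -/
theorem catalyst_identity (x y : Multiset ℝ)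
    (hx : ∀ a ∈ x, (0 : ℝ) ≤ a) (hy : ∀ a ∈ y, (0 : ℝ) ≤ a)
    (n : ℕ) (hn : 1 ≤ n) :
    ∃ w : Multiset ℝ,
      mTensor x (∑ k ∈ Finset.range n, mTensor (mPow x (n - 1 - k)) (mPow y k))
        = mPow x n + w ∧
      mTensor y (∑ k ∈ Finset.range n, mTensor (mPow x (n - 1 - k)) (mPow y k))
        = mPow y n + w := by
  obtain ⟨m, rfl⟩ : ∃ m, n = m + 1 := ⟨n - 1, by omega⟩
  refine ⟨∑ k ∈ Finset.range m, mTensor (mPow x (m - k)) (mPow y (k + 1)), ?_, ?_⟩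
  · rw [mTensor_sum]
    have h1 : ∀ k ∈ Finset.range (m + 1),
        mTensor x (mTensor (mPow x (m + 1 - 1 - k)) (mPow y k))
          = mTensor (mPow x (m + 1 - k)) (mPow y k) := by
      intro k hk
      have hk' : k ≤ m := by simpa [Nat.lt_succ_iff] using hk
      have e1 : m + 1 - 1 - k = m - k := by omega
      have e2 : m + 1 - k = m - k + 1 := by omega
      rw [e1, e2]
      exact mTensor_assoc x (mPow x (m - k)) (mPow y k)
    rw [Finset.sum_congr rfl h1, Finset.sum_range_succ']
    simp only [Nat.sub_zero]
    rw [show mPow y 0 = ({1} : Multiset ℝ) from rfl, mTensor_one (mPow x (m + 1)), add_comm]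
    congr 1
    apply Finset.sum_congr rfl
    intro k hk
    have : m + 1 - (k + 1) = m - k := by omega
    rw [this]
  · rw [mTensor_sum]
    have h1 : ∀ k ∈ Finset.range (m + 1),
        mTensor y (mTensor (mPow x (m + 1 - 1 - k)) (mPow y k))
          = mTensor (mPow x (m - k)) (mPow y (k + 1)) := by
      intro k hk
      have e1 : m + 1 - 1 - k = m - k := by omega
      rw [e1, mTensor_comm y, ← mTensor_assoc, mTensor_comm (mPow y k) y,
        show mTensor y (mPow y k) = mPow y (k + 1) from rfl]
    rw [Finset.sum_congr rfl h1, Finset.sum_range_succ]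
    simp only [Nat.sub_self]
    rw [show mPow x 0 = ({1} : Multiset ℝ) from rfl, one_mTensor, add_comm]
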